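/- Refinement Theorem: Given a heap automaton A over a class of symbolic heaps and a system of inductive definitions (SID) Φ, one can construct a refined SID Ψ over predicate symbols Pred(Φ) × Q_A ∪ Pred(Φ) — adding for every rule P ⇐ φ of Φ with predicate calls P₁,…,P_m and every transition (q₁…q_m, φ, q₀) ∈ Δ_A a rule (P,q₀) ⇐ φ[Pᵢ ↦ (Pᵢ,qᵢ)], plus a rule P ⇐ (P,q) x⃗ for each final state q — such that for every predicate P of Φ, the set of unfoldings of P with respect to Ψ equals the intersection of the set of unfoldings of P with respect to Φ with the language L(A). -/

import Mathlib

namespace HeapAutomata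

/-- A heap automaton over a class of symbolic heaps `SH` whose number of
predicate calls is given by `calls`. -/
structure HeapAutomaton (SH : Type) (calls : SH → ℕ) : Type 1 where
  Q : Type
  finQ : Finite Q
  Δ : List Q → SH → Q → Prop
  F : Set Q
  len_eq : ∀ qs φ q, Δ qs φ q → qs.length = calls φ

variable {SH : Type} {calls : SH → ℕ}

/-- The language of a heap automaton: all reduced (predicate-call-free) symbolic
heaps assigned some final state. -/
def Lang (A : HeapAutomaton SH calls) : Set SH :=
  {τ | calls τ = 0 ∧ ∃ q ∈ A.F, A.Δ [] τ q}

/-- The compositionality property of heap automata, relative to the substitution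
operation `subst` replacing the predicate calls of a symbolic heap by reduced
symbolic heaps. -/
def Compositional (subst : SH → List SH → SH) (A : HeapAutomaton SH calls) : Prop :=
  ∀ (p : A.Q) (φ : SH) (τs : List SH),
    (∀ τ ∈ τs, calls τ = 0) → τs.length = calls φ →
    ((∃ qs : List A.Q, A.Δ qs φ p ∧ List.Forall₂ (fun τ q => A.Δ [] τ q) τs qs) ↔
      A.Δ [] (subst φ τs) p)


section SID

variable {PS : Type} (calls : SH → ℕ) (subst : SH → List SH → SH)

/-- A system of inductive definitions over predicate symbols `PS`: a rule
`Φ P φ ps` maps the predicate symbol `P` to the body `φ`, whose predicate calls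
are labeled (in order) by the predicate symbols `ps`. -/
abbrev SIDa (PS : Type) (SH : Type) := PS → SH → List PS → Prop

/-- Unfoldings of bounded depth. -/
def UnfoldN (Φ : SIDa PS SH) : ℕ → PS → SH → Prop :=
  Nat.rec (fun _ _ => False)
    (fun _ ih p τ => ∃ φ ps τs, Φ p φ ps ∧
      List.Forall₂ (fun q σ => ih q σ) ps τs ∧ τ = subst φ τs)

/-- `τ` is obtained by (fully) unfolding the predicate `p` via the rules of `Φ`. -/
def UnfoldPred (Φ : SIDa PS SH) (p : PS) (τ : SH) : Prop := ∃ n, UnfoldN subst Φ n p τ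

/-- The set of unfoldings of a predicate: the reduced symbolic heaps obtained by
unfolding it. -/
def UnfoldSet (Φ : SIDa PS SH) (p : PS) : Set SH :=
  {τ | calls τ = 0 ∧ UnfoldPred subst Φ p τ}

end SID



section AuxLemmas

variable {PS : Type} {calls : SH → ℕ}

private lemma forall₂_mem_right {α β : Type _} {R : α → β → Prop} :
    ∀ {l₁ : List α} {l₂ : List β}, List.Forall₂ R l₁ l₂ → ∀ b ∈ l₂, ∃ a ∈ l₁, R a b := by
  intro l₁ l₂ h
  induction h with
  | nil => intro b hb; exact absurd hb List.not_mem_nil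
  | cons hab _ ih =>
    intro b hb
    rcases List.mem_cons.mp hb with rfl | hb
    · exact ⟨_, List.mem_cons_self, hab⟩
    · obtain ⟨a, ha, hr⟩ := ih b hb
      exact ⟨a, List.mem_cons_of_mem _ ha, hr⟩

/-- Combine two `Forall₂`s into one over a zipped list. -/
private lemma forall₂_zip_of {α β γ : Type _} {R : α → γ → Prop} {S : γ → β → Prop}
    {T : α × β → γ → Prop} (h : ∀ a b c, R a c → S c b → T (a, b) c) :
    ∀ {ps : List α} {τs : List γ} {qs : List β},
      List.Forall₂ R ps τs → List.Forall₂ S τs qs → List.Forall₂ T (ps.zip qs) τs := by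
  intro ps τs qs h₁
  induction h₁ generalizing qs with
  | nil =>
    intro h₂
    rcases List.forall₂_nil_left_iff.mp h₂ with rfl
    exact List.Forall₂.nil
  | @cons a c ps' τs' hac _ ih =>
    intro h₂
    rcases List.forall₂_cons_left_iff.mp h₂ with ⟨b, qs', hcb, h₂', rfl⟩
    exact List.Forall₂.cons (h _ _ _ hac hcb) (ih h₂')

/-- Split a `Forall₂` over a zipped list into two. -/
private lemma forall₂_unzip {α β γ : Type _} {R : α → γ → Prop} {S : γ → β → Prop}
    {T : α × β → γ → Prop} (h : ∀ a b c, T (a, b) c → R a c ∧ S c b) :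
    ∀ {ps : List α} {qs : List β} {τs : List γ}, ps.length = qs.length →
      List.Forall₂ T (ps.zip qs) τs →
      List.Forall₂ R ps τs ∧ List.Forall₂ S τs qs := by
  intro ps
  induction ps with
  | nil =>
    intro qs τs hlen hfa
    rcases (List.length_eq_zero_iff.mp hlen.symm) with rfl
    rcases List.forall₂_nil_left_iff.mp hfa with rfl
    exact ⟨List.Forall₂.nil, List.Forall₂.nil⟩
  | cons a ps' ih =>
    intro qs τs hlen hfa
    rcases qs with _ | ⟨b, qs'⟩
    · simp at hlen
    rcases τs with _ | ⟨c, τs'⟩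
    · exact absurd hfa (by simp [List.zip_cons_cons])
    rw [List.zip_cons_cons] at hfa
    rcases List.forall₂_cons.mp hfa with ⟨hT, hfa'⟩
    obtain ⟨h₁, h₂⟩ := h _ _ _ hT
    obtain ⟨hR, hS⟩ := ih (by simpa using hlen) hfa'
    exact ⟨List.Forall₂.cons h₁ hR, List.Forall₂.cons h₂ hS⟩

private lemma unfoldN_succ_iff (subst : SH → List SH → SH) (Φ : SIDa PS SH)
    (n : ℕ) (p : PS) (τ : SH) :
    UnfoldN subst Φ (n+1) p τ ↔ ∃ φ ps τs, Φ p φ ps ∧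
      List.Forall₂ (fun q σ => UnfoldN subst Φ n q σ) ps τs ∧ τ = subst φ τs := Iff.rfl

/-- Every unfolding of a well-formed SID is reduced. -/
private lemma unfold_reduced (subst : SH → List SH → SH) (Φ : SIDa PS SH)
    (hwf : ∀ P φ ps, Φ P φ ps → ps.length = calls φ)
    (hsubst : ∀ φ τs, τs.length = calls φ → (∀ τ ∈ τs, calls τ = 0) →
      calls (subst φ τs) = 0) :
    ∀ n p τ, UnfoldN subst Φ n p τ → calls τ = 0 := by
  intro n
  induction n with
  | zero => intro p τ h; exact h.elim
  | succ n ih =>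
    rintro p τ ⟨φ, ps, τs, hΦ, hfa, rfl⟩
    refine hsubst φ τs ?_ ?_
    · rw [← hfa.length_eq]; exact hwf _ _ _ hΦ
    · intro σ hσ
      obtain ⟨q, _, h⟩ := forall₂_mem_right hfa σ hσ
      exact ih q σ h

end AuxLemmas

section Refinement

variable {PS : Type} {calls : SH → ℕ}

/-- The refined SID of Theorem (Refinement): predicate symbols are
`Pred(Φ) × Q_A ⊕ Pred(Φ)`.  For every rule `P ⇐ φ` of `Φ` with calls labeled
`ps` and every transition `(qs, φ, q₀) ∈ Δ_A` there is a rule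
`(P, q₀) ⇐ φ` with calls labeled by the pairs `(psᵢ, qsᵢ)`; moreover, for every
final state `q` there is a rule `P ⇐ (P, q) x⃗`, whose body is the single
predicate call `callHeap`. -/
def refineSID (Φ : SIDa PS SH) (A : HeapAutomaton SH calls) (callHeap : SH) :
    SIDa (PS × A.Q ⊕ PS) SH := fun head body labels =>
  (∃ P q₀ ps qs, head = Sum.inl (P, q₀) ∧ Φ P body ps ∧ A.Δ qs body q₀ ∧
      ps.length = qs.length ∧ labels = (ps.zip qs).map Sum.inl) ∨
  (∃ P q, head = Sum.inr P ∧ q ∈ A.F ∧ body = callHeap ∧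
      labels = [Sum.inl (P, q)])

/-- Well-formedness of the refined SID. -/
private lemma refine_wf (Φ : SIDa PS SH) (A : HeapAutomaton SH calls) (callHeap : SH)
    (hcall₁ : calls callHeap = 1)
    (hwf : ∀ P φ ps, Φ P φ ps → ps.length = calls φ) :
    ∀ P φ ps, refineSID Φ A callHeap P φ ps → ps.length = calls φ := by
  rintro P φ ps (⟨P', q₀, ps', qs, rfl, hΦ, hΔ, hlen, rfl⟩ | ⟨P', q, rfl, hq, rfl, rfl⟩)
  · simp [List.length_zip, hlen, ← hwf _ _ _ hΦ]
  · simp [hcall₁]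

/-- Forward simulation: unfoldings of `(P, q)` in the refined SID are
unfoldings of `P` in `Φ` that are assigned state `q`. -/
private lemma refine_forward (subst : SH → List SH → SH)
    (Φ : SIDa PS SH) (A : HeapAutomaton SH calls)
    (hA : Compositional subst A) (callHeap : SH)
    (hcall₁ : calls callHeap = 1)
    (hwf : ∀ P φ ps, Φ P φ ps → ps.length = calls φ)
    (hsubst : ∀ φ τs, τs.length = calls φ → (∀ τ ∈ τs, calls τ = 0) →
      calls (subst φ τs) = 0) :
    ∀ n (P : PS) (q : A.Q) (τ : SH),
      UnfoldN subst (refineSID Φ A callHeap) n (Sum.inl (P, q)) τ →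
      UnfoldN subst Φ n P τ ∧ A.Δ [] τ q := by
  intro n
  induction n with
  | zero => intro P q τ h; exact h.elim
  | succ n ih =>
    rintro P q τ ⟨φ, labels, τs, hrule, hfa, rfl⟩
    rcases hrule with ⟨P', q₀, ps, qs, heq, hΦ, hΔ, hlen, rfl⟩ | ⟨P', q', heq, _, _, _⟩
    · obtain ⟨rfl, rfl⟩ : P = P' ∧ q = q₀ := by
        simpa [Prod.ext_iff] using heq
      rw [List.forall₂_map_left_iff] at hfa
      obtain ⟨hfa₁, hfa₂⟩ := forall₂_unzip
        (T := fun pq σ => UnfoldN subst Φ n pq.1 σ ∧ A.Δ [] σ pq.2)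
        (R := fun p σ => UnfoldN subst Φ n p σ) (S := fun σ q => A.Δ [] σ q)
        (fun _ _ _ h => h) hlen
        (hfa.imp (fun pq σ h => ih pq.1 pq.2 σ h))
      have hred : ∀ σ ∈ τs, calls σ = 0 := by
        intro σ hσ
        obtain ⟨p, _, h⟩ := forall₂_mem_right hfa₁ σ hσ
        exact unfold_reduced subst Φ hwf hsubst n p σ h
      have hτlen : τs.length = calls φ := by
        rw [← hfa₁.length_eq]; exact hwf _ _ _ hΦ
      refine ⟨⟨φ, ps, τs, hΦ, hfa₁, rfl⟩, ?_⟩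
      exact (hA q φ τs hred hτlen).mp ⟨qs, hΔ, hfa₂⟩
    · exact absurd heq (by simp)

/-- Backward simulation. -/
private lemma refine_backward (subst : SH → List SH → SH)
    (Φ : SIDa PS SH) (A : HeapAutomaton SH calls)
    (hA : Compositional subst A) (callHeap : SH)
    (hwf : ∀ P φ ps, Φ P φ ps → ps.length = calls φ)
    (hsubst : ∀ φ τs, τs.length = calls φ → (∀ τ ∈ τs, calls τ = 0) →
      calls (subst φ τs) = 0) :
    ∀ n (P : PS) (q : A.Q) (τ : SH),
      UnfoldN subst Φ n P τ → A.Δ [] τ q →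
      UnfoldN subst (refineSID Φ A callHeap) n (Sum.inl (P, q)) τ := by
  intro n
  induction n with
  | zero => intro P q τ h; exact h.elim
  | succ n ih =>
    rintro P q τ ⟨φ, ps, τs, hΦ, hfa, rfl⟩ hΔτ
    have hred : ∀ σ ∈ τs, calls σ = 0 := by
      intro σ hσ
      obtain ⟨p, _, h⟩ := forall₂_mem_right hfa σ hσ
      exact unfold_reduced subst Φ hwf hsubst n p σ h
    have hτlen : τs.length = calls φ := by
      rw [← hfa.length_eq]; exact hwf _ _ _ hΦ
    obtain ⟨qs, hΔ, hfa₂⟩ := (hA q φ τs hred hτlen).mpr hΔτ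
    refine ⟨φ, (ps.zip qs).map Sum.inl, τs, ?_, ?_, rfl⟩
    · exact Or.inl ⟨P, q, ps, qs, rfl, hΦ, hΔ,
        by rw [hfa.length_eq, hfa₂.length_eq], rfl⟩
    · rw [List.forall₂_map_left_iff]
      exact forall₂_zip_of (fun p q' σ h₁ h₂ => ih p q' σ h₁ h₂) hfa hfa₂

/-- Refinement Theorem: for a compositional heap automaton `A`
and an SID `Φ`, the refined SID `Ψ = refineSID Φ A callHeap` satisfies
`⟦P x⃗⟧_Ψ = ⟦P x⃗⟧_Φ ∩ L(A)` for every predicate symbol `P` of `Φ`. -/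

theorem refinement_theorem
    (subst : SH → List SH → SH)
    (Φ : SIDa PS SH) (A : HeapAutomaton SH calls)
    (hA : Compositional subst A)
    (callHeap : SH)
    (hcall₁ : calls callHeap = 1)
    (hcall₂ : ∀ τ, subst callHeap [τ] = τ)
    (hwf : ∀ P φ ps, Φ P φ ps → ps.length = calls φ)
    (hsubst : ∀ φ τs, τs.length = calls φ → (∀ τ ∈ τs, calls τ = 0) →
      calls (subst φ τs) = 0) :
    ∀ P : PS,
      UnfoldSet calls subst (refineSID Φ A callHeap) (Sum.inr P) =
        UnfoldSet calls subst Φ P ∩ Lang A := by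
  intro P
  ext τ
  constructor
  · rintro ⟨hred, n, hn⟩
    rcases n with _ | n
    · exact hn.elim
    obtain ⟨φ, labels, τs, hrule, hfa, rfl⟩ := hn
    rcases hrule with ⟨P', q₀, ps, qs, heq, _, _, _, _⟩ | ⟨P', q, heq, hqF, hbody, rfl⟩
    · exact absurd heq (by simp)
    · obtain rfl : P = P' := by simpa using heq
      rcases List.forall₂_cons_left_iff.mp hfa with ⟨σ, τs', hσ, hτs', rfl⟩
      rcases List.forall₂_nil_left_iff.mp hτs' with rfl
      obtain ⟨hΦn, hΔ⟩ := refine_forward subst Φ A hA callHeap hcall₁ hwf hsubst n P q σ hσ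
      have hσred : calls σ = 0 :=
        unfold_reduced subst Φ hwf hsubst n P σ hΦn
      rw [hbody, hcall₂ σ]
      exact ⟨⟨hσred, n, hΦn⟩, hσred, q, hqF, hΔ⟩
  · rintro ⟨⟨hred, n, hn⟩, _, q, hqF, hΔ⟩
    refine ⟨hred, n + 1, ?_⟩
    refine ⟨callHeap, [Sum.inl (P, q)], [τ], Or.inr ⟨P, q, rfl, hqF, rfl, rfl⟩, ?_,
      (hcall₂ τ).symm⟩
    exact List.Forall₂.cons
      (refine_backward subst Φ A hA callHeap hwf hsubst n P q τ hn hΔ) List.Forall₂.nil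


end Refinement

end HeapAutomata
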